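/- Define the Quicksort comparison count qc : List ℕ → ℕ recursively by qc([]) = 0 and qc(p :: l) = (length of l) + qc(filter of l by elements < p) + qc(filter of l by elements > p), and let N(n,i) be the number of permutations (as lists) of {1,…,n} with qc equal to i. For n ≥ 1 set k := ⌊log₂(n+1)⌋, m_n := k(n+1) − 2^{k+1} + 2, and M_n := n(n−1)/2 (with m_0 = M_0 = 0). Then for all n and i: N(n,i) > 0 if and only if m_n ≤ i ≤ M_n. -/

import Mathlib

/-- Number of key comparisons made by Quicksort, using the first element as pivot. -/
def qc : List ℕ → ℕ
  | [] => 0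
  | p :: l => l.length + qc (l.filter (fun x => x < p)) + qc (l.filter (fun x => p < x))
termination_by l => l.length
decreasing_by
  all_goals first
    | exact Nat.lt_succ_of_le (List.length_filter_le _ _)
    | (rw [List.length_unattach]; exact Nat.lt_succ_of_le ((List.length_filter_le _ _).trans_eq List.length_attach))
    | exact Nat.lt_succ_of_le (by simpa using List.length_filter_le _ _)

/-- `N n i` is the number of permutations (as lists) of `{1, …, n}` on which Quicksort
makes exactly `i` key comparisons. -/
def N (n i : ℕ) : ℕ :=
  ((List.range' 1 n).permutations.filter (fun σ => qc σ = i)).length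

/-- `m n = k (n+1) - 2^(k+1) + 2` with `k = ⌊log₂ (n+1)⌋`; the least possible number of
comparisons (total path length of the complete tree on `n` nodes).  Note `m 0 = 0`. -/
def m (n : ℕ) : ℕ :=
  Nat.log 2 (n + 1) * (n + 1) + 2 - 2 ^ (Nat.log 2 (n + 1) + 1)



def S (n : ℕ) : ℕ := ∑ i ∈ Finset.range n, Nat.log 2 (i + 1)

def T (n : ℕ) : ℕ := ∑ i ∈ Finset.range n, i

lemma S_succ (n : ℕ) : S (n + 1) = S n + Nat.log 2 (n + 1) :=
  Finset.sum_range_succ _ _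

lemma T_succ (n : ℕ) : T (n + 1) = T n + n := Finset.sum_range_succ _ _

lemma T_eq (n : ℕ) : T n = n * (n - 1) / 2 := Finset.sum_range_id n

lemma m_key (n : ℕ) :
    S n + 2 ^ (Nat.log 2 (n + 1) + 1) = Nat.log 2 (n + 1) * (n + 1) + 2 := by
  induction n with
  | zero => simp [S]
  | succ n ih =>
    set k := Nat.log 2 (n + 1) with hk
    have h1 : n + 1 < 2 ^ (k + 1) := Nat.lt_pow_succ_log_self (by norm_num) _
    have h2 : 2 ^ k ≤ n + 1 := Nat.pow_log_le_self 2 (by omega)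
    have hp : (2:ℕ) ^ (k + 1) = 2 * 2 ^ k := by ring
    rcases lt_or_eq_of_le (by omega : n + 2 ≤ 2 ^ (k + 1)) with h | h
    · have hk' : Nat.log 2 (n + 2) = k :=
        Nat.log_eq_of_pow_le_of_lt_pow (by omega) h
      rw [S_succ, show n + 1 + 1 = n + 2 from rfl, hk', ← hk]
      have e : k * (n + 2) = k * (n + 1) + k := by ring
      omega
    · have hk' : Nat.log 2 (n + 2) = k + 1 := by
        rw [h, Nat.log_pow (by norm_num)]
      rw [S_succ, show n + 1 + 1 = n + 2 from rfl, hk', ← hk]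
      have e1 : k * (n + 1) + k = k * (n + 2) := by ring
      have e2 : (k + 1) * (n + 2) = k * (n + 2) + (n + 2) := by ring
      have e3 : k * (n + 2) = k * 2 ^ (k + 1) := by rw [← h]
      have e4 : (2:ℕ) ^ (k + 1 + 1) = 2 * 2 ^ (k + 1) := by ring
      omega

lemma m_eq_S (n : ℕ) : m n = S n := by
  have := m_key n
  unfold m
  omega

lemma log2_lt (c x : ℕ) (h1 : 0 < c) (h2 : c < 2 ^ x) : Nat.log 2 c < x :=
  (Nat.log_lt_iff_lt_pow (by norm_num) (by omega)).mpr h2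

lemma log2_le' (c : ℕ) (hc : 1 ≤ c) : Nat.log 2 (c + 2) ≤ c := by
  have h : Nat.log 2 (c + 2) < c + 1 := by
    apply log2_lt _ _ (by omega)
    have h1 : c + 1 < 2 ^ (c + 1) := Nat.lt_two_pow_self
    have h2 : c < 2 ^ c := Nat.lt_two_pow_self
    have : 2 * 2 ^ c = 2 ^ (c + 1) := by ring
    omega
  omega

lemma log_two : Nat.log 2 2 = 1 :=
  Nat.log_eq_of_pow_le_of_lt_pow (by norm_num) (by norm_num)

/-- key: S (c+1) ≤ T c + 1 -/
lemma S_le_T_succ (c : ℕ) : S (c + 1) ≤ T c + 1 := by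
  induction c with
  | zero => simp [S, T]
  | succ c ih =>
    rw [S_succ, T_succ]
    rcases Nat.eq_zero_or_pos c with rfl | hc
    · simpa [S, T, Finset.sum_range_succ, log_two] using le_refl 2
    · have h := log2_le' c hc
      rw [show c + 1 + 1 = c + 2 from rfl]
      omega

lemma S_le_T (c : ℕ) : S c ≤ T c := by
  match c with
  | 0 => exact le_refl 0
  | 1 => simp [S, T, Finset.sum_range_succ]
  | (c+2) =>
    have h1 : S (c+2) ≤ T (c+1) + 1 := S_le_T_succ (c+1)
    have h2 : T (c+2) = T (c+1) + (c+1) := T_succ (c+1)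
    omega

lemma S_ge (n : ℕ) : n ≤ S (n + 1) := by
  induction n with
  | zero => simp [S]
  | succ n ih =>
    rw [S_succ]
    have : 0 < Nat.log 2 (n + 1 + 1) := Nat.log_pos (by norm_num) (by omega)
    omega

lemma log_double (j : ℕ) (h : 1 ≤ j) : Nat.log 2 (2 * j) = Nat.log 2 j + 1 := by
  have h2 : 2 ^ Nat.log 2 j ≤ j := Nat.pow_log_le_self 2 (by omega)
  have h1 : j < 2 ^ (Nat.log 2 j + 1) := Nat.lt_pow_succ_log_self (by norm_num) _
  refine Nat.log_eq_of_pow_le_of_lt_pow ?_ ?_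
  · rw [pow_succ]; omega
  · have : 2 ^ (Nat.log 2 j + 1 + 1) = 2 * 2 ^ (Nat.log 2 j + 1) := by ring
    omega

lemma log_double' (j : ℕ) (h : 1 ≤ j) : Nat.log 2 (2 * j + 1) = Nat.log 2 j + 1 := by
  have h2 : 2 ^ Nat.log 2 j ≤ j := Nat.pow_log_le_self 2 (by omega)
  have h1 : j < 2 ^ (Nat.log 2 j + 1) := Nat.lt_pow_succ_log_self (by norm_num) _
  refine Nat.log_eq_of_pow_le_of_lt_pow ?_ ?_
  · rw [pow_succ]; omega
  · have : 2 ^ (Nat.log 2 j + 1 + 1) = 2 * 2 ^ (Nat.log 2 j + 1) := by ring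
    omega

lemma S_odd (k : ℕ) : S (2 * k + 1) = 2 * S k + 2 * k := by
  induction k with
  | zero => simp [S, Finset.sum_range_succ]
  | succ k ih =>
    have e1 : 2 * (k + 1) + 1 = (2 * k + 1) + 1 + 1 := by ring
    rw [e1, S_succ, S_succ, ih, S_succ]
    have l1 : Nat.log 2 (2 * k + 1 + 1) = Nat.log 2 (k + 1) + 1 := by
      have h := log_double (k + 1) (by omega)
      rw [show 2 * k + 1 + 1 = 2 * (k + 1) by ring, h]
    have l2 : Nat.log 2 (2 * k + 1 + 1 + 1) = Nat.log 2 (k + 1) + 1 := by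
      have h := log_double' (k + 1) (by omega)
      rw [show 2 * k + 1 + 1 + 1 = 2 * (k + 1) + 1 by ring, h]
    rw [l1, l2]; ring

/-- Fact B : S (n+1) = n + S (n/2) + S (n - n/2) -/
lemma S_split (n : ℕ) : S (n + 1) = n + S (n / 2) + S (n - n / 2) := by
  rcases Nat.even_or_odd n with ⟨k, hk⟩ | ⟨k, hk⟩
  · subst hk
    rw [show k + k = 2 * k by ring]
    rw [show 2 * k / 2 = k by omega, show 2 * k - k = k by omega, S_odd]
    ring
  · subst hk
    rw [show (2 * k + 1) / 2 = k by omega, show 2 * k + 1 - k = k + 1 by omega]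
    rw [show 2 * k + 1 + 1 = (2 * k + 1) + 1 from rfl, S_succ, S_odd, S_succ]
    have l1 : Nat.log 2 (2 * k + 1 + 1) = Nat.log 2 (k + 1) + 1 := by
      have h := log_double (k + 1) (by omega)
      rw [show 2 * k + 1 + 1 = 2 * (k + 1) by ring, h]
    rw [l1]; ring

lemma S_conv_step (a b : ℕ) (h : a ≤ b) :
    S (a + 1) + S b ≤ S a + S (b + 1) := by
  rw [S_succ, S_succ]
  have : Nat.log 2 (a + 1) ≤ Nat.log 2 (b + 1) := Nat.log_mono_right (by omega)
  omega

lemma S_min_aux : ∀ d a : ℕ,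
    S ((a + (a + d)) / 2) + S (a + (a + d) - (a + (a + d)) / 2) ≤ S a + S (a + d) := by
  intro d
  induction d using Nat.strong_induction_on with
  | _ d ih =>
    intro a
    match d with
    | 0 =>
      have e1 : (a + (a + 0)) / 2 = a := by omega
      rw [e1, show a + (a + 0) - a = a + 0 from by omega]
    | 1 =>
      have e1 : (a + (a + 1)) / 2 = a := by omega
      rw [e1, show a + (a + 1) - a = a + 1 from by omega]
    | (d+2) =>
      have step := S_conv_step a (a + d + 1) (by omega)
      have ihd := ih d (by omega) (a + 1)
      have e1 : a + 1 + (a + 1 + d) = a + (a + (d + 2)) := by omega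
      rw [e1] at ihd
      have e2 : a + d + 1 + 1 = a + (d + 2) := by omega
      rw [e2] at step
      have e3 : a + 1 + d = a + d + 1 := by omega
      rw [e3] at ihd
      omega

/-- Fact A -/
lemma S_min (a b : ℕ) :
    S ((a + b) / 2) + S (a + b - (a + b) / 2) ≤ S a + S b := by
  rcases le_total a b with h | h
  · have := S_min_aux (b - a) a
    rw [show a + (b - a) = b by omega] at this
    exact this
  · have := S_min_aux (a - b) b
    rw [show b + (a - b) = a by omega, show b + a = a + b by ring] at this
    omega

lemma T_superadd (a b : ℕ) : T a + T b ≤ T (a + b) := by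
  induction b with
  | zero => simp [T]
  | succ b ih =>
    rw [T_succ, show a + (b+1) = (a+b)+1 from rfl, T_succ]
    omega



lemma qc_cons (p : ℕ) (l : List ℕ) :
    qc (p :: l) = l.length + qc (l.filter (fun x => x < p)) + qc (l.filter (fun x => p < x)) := by
  rw [qc]

lemma qc_shift (t : ℕ) : ∀ (n : ℕ) (l : List ℕ), l.length ≤ n →
    qc (l.map (fun x => x + t)) = qc l := by
  intro n
  induction n with
  | zero =>
    intro l h
    have : l = [] := List.length_eq_zero_iff.mp (by omega)
    subst this; rfl
  | succ n ih =>
    intro l h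
    match l with
    | [] => rfl
    | p :: l =>
      rw [List.map_cons, qc_cons, qc_cons]
      have hf1 : (l.map (fun x => x + t)).filter (fun x => x < p + t)
          = (l.filter (fun x => x < p)).map (fun x => x + t) := by
        rw [List.filter_map]
        congr 1
        apply List.filter_congr
        intro x _
        simp only [Function.comp]
        simp only [decide_eq_decide]
        omega
      have hf2 : (l.map (fun x => x + t)).filter (fun x => p + t < x)
          = (l.filter (fun x => p < x)).map (fun x => x + t) := by
        rw [List.filter_map]
        congr 1
        apply List.filter_congr
        intro x _
        simp only [Function.comp]
        simp only [decide_eq_decide]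
        omega
      simp only [List.length_cons] at h
      rw [hf1, hf2, List.length_map,
        ih _ (le_trans (List.length_filter_le _ _) (by omega)),
        ih _ (le_trans (List.length_filter_le _ _) (by omega))]

def Q (n i : ℕ) : Prop := ∃ σ : List ℕ, σ.Perm (List.range' 1 n) ∧ qc σ = i

lemma N_pos (n i : ℕ) : 0 < N n i ↔ Q n i := by
  unfold N Q
  rw [List.length_pos_iff_exists_mem]
  constructor
  · rintro ⟨σ, hσ⟩
    rw [List.mem_filter, List.mem_permutations] at hσ
    exact ⟨σ, hσ.1, by simpa using hσ.2⟩
  · rintro ⟨σ, h1, h2⟩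
    exact ⟨σ, by rw [List.mem_filter, List.mem_permutations]; exact ⟨h1, by simpa using h2⟩⟩

lemma Q_zero (i : ℕ) : Q 0 i ↔ i = 0 := by
  constructor
  · rintro ⟨σ, h1, h2⟩
    have : σ = [] := by simpa using h1.eq_nil
    subst this
    simp [qc] at h2; omega
  · rintro rfl
    exact ⟨[], by simp, by simp [qc]⟩

lemma range'_split_lt (p n : ℕ) (hp : 1 ≤ p) (hpn : p ≤ n + 1) :
    (List.range' 1 (n + 1)).filter (fun x => x < p) = List.range' 1 (p - 1) := by
  have hsplit : List.range' 1 (p - 1) ++ List.range' p (n + 1 - (p - 1)) = List.range' 1 (n + 1) := by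
    have := List.range'_append (s := 1) (m := p - 1) (n := n + 1 - (p - 1)) (step := 1)
    simp only [one_mul, Nat.mul_one] at this ⊢
    rw [show 1 + (p - 1) = p by omega] at this
    rw [show p - 1 + (n + 1 - (p - 1)) = n + 1 by omega] at this
    exact this
  rw [← hsplit, List.filter_append]
  have h1 : (List.range' 1 (p - 1)).filter (fun x => x < p) = List.range' 1 (p - 1) := by
    rw [List.filter_eq_self]
    intro a ha
    rw [List.mem_range'_1] at ha
    simpa using by omega
  have h2 : (List.range' p (n + 1 - (p - 1))).filter (fun x => x < p) = [] := by
    rw [List.filter_eq_nil_iff]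
    intro a ha
    rw [List.mem_range'_1] at ha
    simpa using by omega
  rw [h1, h2, List.append_nil]

lemma range'_split_gt (p n : ℕ) (hp : 1 ≤ p) (hpn : p ≤ n + 1) :
    (List.range' 1 (n + 1)).filter (fun x => p < x) = List.range' (p + 1) (n + 1 - p) := by
  have hsplit : List.range' 1 p ++ List.range' (p + 1) (n + 1 - p) = List.range' 1 (n + 1) := by
    have := List.range'_append (s := 1) (m := p) (n := n + 1 - p) (step := 1)
    simp only [one_mul, Nat.mul_one] at this ⊢
    rw [show 1 + p = p + 1 by omega] at this
    rw [show p + (n + 1 - p) = n + 1 by omega] at this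
    exact this
  rw [← hsplit, List.filter_append]
  have h1 : (List.range' 1 p).filter (fun x => p < x) = [] := by
    rw [List.filter_eq_nil_iff]
    intro a ha
    rw [List.mem_range'_1] at ha
    simpa using by omega
  have h2 : (List.range' (p + 1) (n + 1 - p)).filter (fun x => p < x)
      = List.range' (p + 1) (n + 1 - p) := by
    rw [List.filter_eq_self]
    intro a ha
    rw [List.mem_range'_1] at ha
    simpa using by omega
  rw [h1, h2, List.nil_append]

lemma range'_shift (b p : ℕ) :
    (List.range' 1 b).map (fun x => x + p) = List.range' (p + 1) b := by
  have := List.map_add_range' (a := p) 1 b 1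
  rw [← this]
  apply List.map_congr_left
  intro a _
  omega

lemma Q_shifted (b k p : ℕ) :
    (∃ τ : List ℕ, τ.Perm (List.range' (p + 1) b) ∧ qc τ = k) ↔ Q b k := by
  constructor
  · rintro ⟨τ, h1, h2⟩
    have hmem : ∀ x ∈ τ, p + 1 ≤ x := by
      intro x hx
      have := (h1.mem_iff).mp hx
      rw [List.mem_range'_1] at this
      omega
    refine ⟨τ.map (fun x => x - (p + 1) + 1), ?_, ?_⟩
    · have hperm : (τ.map (fun x => x - (p + 1) + 1)).Perm
          ((List.range' (p + 1) b).map (fun x => x - (p + 1) + 1)) := h1.map _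
      have : (List.range' (p + 1) b).map (fun x => x - (p + 1) + 1) = List.range' 1 b := by
        rw [← range'_shift b p]
        rw [List.map_map]
        conv_rhs => rw [← List.map_id (List.range' 1 b)]
        apply List.map_congr_left
        intro x hx
        rw [List.mem_range'_1] at hx
        simp only [Function.comp, id]
        omega
      rwa [this] at hperm
    · have heq : (τ.map (fun x => x - (p + 1) + 1)).map (fun x => x + p) = τ := by
        rw [List.map_map]
        have : τ.map ((fun x => x + p) ∘ (fun x => x - (p + 1) + 1)) = τ.map id := by
          apply List.map_congr_left
          intro x hx
          have := hmem x hx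
          simp only [Function.comp, id]
          omega
        rw [this, List.map_id]
      calc qc (τ.map (fun x => x - (p + 1) + 1))
          = qc ((τ.map (fun x => x - (p + 1) + 1)).map (fun x => x + p)) :=
            (qc_shift p _ _ (le_refl _)).symm
        _ = qc τ := by rw [heq]
        _ = k := h2
  · rintro ⟨σ, h1, h2⟩
    refine ⟨σ.map (fun x => x + p), ?_, ?_⟩
    · have := h1.map (fun x => x + p)
      rwa [range'_shift b p] at this
    · rw [qc_shift p _ _ (le_refl _), h2]

lemma Q_split {n i : ℕ} (h : Q (n + 1) i) :
    ∃ a j k, a ≤ n ∧ Q a j ∧ Q (n - a) k ∧ i = n + j + k := by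
  obtain ⟨σ, hσ, hq⟩ := h
  match σ with
  | [] =>
    have := hσ.length_eq
    simp at this
  | p :: l =>
    have hlen : l.length = n := by
      have := hσ.length_eq
      simp [List.length_range'] at this
      omega
    have hp : p ∈ List.range' 1 (n + 1) := hσ.mem_iff.mp List.mem_cons_self
    rw [List.mem_range'_1] at hp
    have hl : l.Perm ((List.range' 1 (n + 1)).erase p) := by
      have h1 : (List.range' 1 (n + 1)).Perm (p :: (List.range' 1 (n + 1)).erase p) :=
        List.perm_cons_erase (by rw [List.mem_range'_1]; omega)
      exact (hσ.trans h1).cons_inv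
    have hfl : ∀ q : ℕ → Bool, ¬ q p = true →
        (l.filter q).Perm ((List.range' 1 (n + 1)).filter q) := by
      intro q hq'
      have h1 := hl.filter q
      have h2 : ((List.range' 1 (n + 1)).filter q).Perm
          ((p :: (List.range' 1 (n + 1)).erase p).filter q) :=
        (List.perm_cons_erase (by rw [List.mem_range'_1]; omega)).filter q
      rw [List.filter_cons_of_neg (by simpa using hq')] at h2
      exact h1.trans h2.symm
    refine ⟨p - 1, qc (l.filter (fun x => x < p)), qc (l.filter (fun x => p < x)),
      by omega, ?_, ?_, ?_⟩
    · refine ⟨l.filter (fun x => x < p), ?_, rfl⟩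
      have := hfl (fun x => decide (x < p)) (by simp)
      rwa [range'_split_lt p n (by omega) (by omega)] at this
    · rw [← Q_shifted _ _ p]
      refine ⟨l.filter (fun x => p < x), ?_, rfl⟩
      have := hfl (fun x => decide (p < x)) (by simp)
      rw [range'_split_gt p n (by omega) (by omega)] at this
      rwa [show n + 1 - p = n - (p - 1) by omega] at this
    · rw [qc_cons] at hq
      omega

lemma Q_combine {a b j k : ℕ} (hj : Q a j) (hk : Q b k) :
    Q (a + b + 1) (a + b + j + k) := by
  obtain ⟨σ₁, h1, hq1⟩ := hj
  obtain ⟨σ₂, h2, hq2⟩ := hk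
  have hm1 : ∀ x ∈ σ₁, 1 ≤ x ∧ x ≤ a := by
    intro x hx
    have := h1.mem_iff.mp hx
    rw [List.mem_range'_1] at this
    omega
  have hm2 : ∀ x ∈ σ₂.map (fun y => y + (a + 1)), a + 1 < x := by
    intro x hx
    rw [List.mem_map] at hx
    obtain ⟨y, hy, rfl⟩ := hx
    have := h2.mem_iff.mp hy
    rw [List.mem_range'_1] at this
    omega
  refine ⟨(a + 1) :: (σ₁ ++ σ₂.map (fun y => y + (a + 1))), ?_, ?_⟩
  · -- permutation
    have e1 : List.range' 1 a ++ List.range' (1 + a) (b + 1) = List.range' 1 (a + b + 1) := by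
      have := List.range'_append (s := 1) (m := a) (n := b + 1) (step := 1)
      simp only [one_mul, Nat.mul_one] at this
      rw [this, show a + (b + 1) = a + b + 1 by omega]
    have e2 : List.range' (1 + a) (b + 1) = (a + 1) :: List.range' (a + 2) b := by
      rw [show 1 + a = a + 1 by omega, List.range'_succ]
    have hmap : (σ₂.map (fun y => y + (a + 1))).Perm (List.range' (a + 2) b) := by
      have := h2.map (fun y => y + (a + 1))
      rwa [range'_shift b (a + 1), show a + 1 + 1 = a + 2 from rfl] at this
    refine ((h1.append hmap).cons _).trans ?_
    rw [← e1, e2]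
    exact List.perm_middle.symm
  · -- qc value
    rw [qc_cons]
    have hlen : (σ₁ ++ σ₂.map (fun y => y + (a + 1))).length = a + b := by
      rw [List.length_append, List.length_map, h1.length_eq, h2.length_eq]
      simp [List.length_range']
    have hf1 : (σ₁ ++ σ₂.map (fun y => y + (a + 1))).filter (fun x => x < a + 1) = σ₁ := by
      rw [List.filter_append]
      have e1 : σ₁.filter (fun x => x < a + 1) = σ₁ := by
        rw [List.filter_eq_self]
        intro x hx
        have := hm1 x hx
        simpa using by omega
      have e2 : (σ₂.map (fun y => y + (a + 1))).filter (fun x => x < a + 1) = [] := by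
        rw [List.filter_eq_nil_iff]
        intro x hx
        have := hm2 x hx
        simpa using by omega
      rw [e1, e2, List.append_nil]
    have hf2 : (σ₁ ++ σ₂.map (fun y => y + (a + 1))).filter (fun x => a + 1 < x)
        = σ₂.map (fun y => y + (a + 1)) := by
      rw [List.filter_append]
      have e1 : σ₁.filter (fun x => a + 1 < x) = [] := by
        rw [List.filter_eq_nil_iff]
        intro x hx
        have := hm1 x hx
        simpa using by omega
      have e2 : (σ₂.map (fun y => y + (a + 1))).filter (fun x => a + 1 < x)
          = σ₂.map (fun y => y + (a + 1)) := by
        rw [List.filter_eq_self]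
        intro x hx
        have := hm2 x hx
        simpa using by omega
      rw [e1, e2, List.nil_append]
    rw [hlen, hf1, hf2, hq1, qc_shift (a + 1) _ _ (le_refl _), hq2]


lemma QS : ∀ n i : ℕ, Q n i ↔ S n ≤ i ∧ i ≤ T n := by
  intro n
  induction n using Nat.strong_induction_on with
  | _ n ih =>
    match n with
    | 0 =>
      intro i
      rw [Q_zero]
      simp [S, T]
    | (n + 1) =>
      intro i
      constructor
      · intro h
        obtain ⟨a, j, k, ha, hQa, hQb, heq⟩ := Q_split h
        have Ha := (ih a (by omega) j).mp hQa
        have Hb := (ih (n - a) (by omega) k).mp hQb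
        constructor
        · have hA := S_min a (n - a)
          rw [show a + (n - a) = n by omega] at hA
          have hB := S_split n
          omega
        · have hT := T_superadd a (n - a)
          rw [show a + (n - a) = n by omega] at hT
          have := T_succ n
          omega
      · rintro ⟨h1, h2⟩
        have hin : n ≤ i := le_trans (S_ge n) h1
        have hex : ∃ a, a ≤ n ∧ S a + S (n - a) + n ≤ i := by
          refine ⟨n / 2, by omega, ?_⟩
          have := S_split n
          omega
        classical
        obtain ⟨a, han, hale, hmin⟩ :
            ∃ a, a ≤ n ∧ S a + S (n - a) + n ≤ i ∧
              ∀ a' < a, ¬(a' ≤ n ∧ S a' + S (n - a') + n ≤ i) :=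
          ⟨Nat.find hex, (Nat.find_spec hex).1, (Nat.find_spec hex).2,
            fun a' h => Nat.find_min hex h⟩
        have hup : i ≤ T a + T (n - a) + n := by
          cases a with
          | zero =>
            have := T_succ n
            simp [T] at *
            omega
          | succ a' =>
            have hna' : ¬ (a' ≤ n ∧ S a' + S (n - a') + n ≤ i) := hmin a' (by omega)
            have h3 : i + 1 ≤ S a' + S (n - a') + n := by
              rcases Nat.lt_or_ge i (S a' + S (n - a') + n) with h | h
              · omega
              · exact absurd ⟨by omega, h⟩ hna'
            have h4 : S a' ≤ T a' := S_le_T a'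
            have h5 : S (n - a') ≤ T (n - a' - 1) + 1 := by
              rw [show n - a' = (n - a' - 1) + 1 by omega]
              exact S_le_T_succ _
            have h6 : T (a' + 1) = T a' + a' := T_succ a'
            have h7 : n - a' - 1 = n - (a' + 1) := by omega
            rw [h7] at h5
            omega
        have hSa : S a ≤ T a := S_le_T a
        have hSb : S (n - a) ≤ T (n - a) := S_le_T (n - a)
        obtain ⟨j, k, hj1, hj2, hk1, hk2, hjk⟩ :
            ∃ j k, S a ≤ j ∧ j ≤ T a ∧ S (n - a) ≤ k ∧ k ≤ T (n - a) ∧ i = n + j + k := by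
          refine ⟨max (S a) (i - n - T (n - a)), i - n - max (S a) (i - n - T (n - a)),
            le_max_left _ _, by omega, by omega, by omega, by omega⟩
        have hc := Q_combine ((ih a (by omega) j).mpr ⟨hj1, hj2⟩)
          ((ih (n - a) (by omega) k).mpr ⟨hk1, hk2⟩)
        rw [show a + (n - a) = n by omega] at hc
        rw [hjk]
        exact hc

/-- `N n i > 0` if and only if `m n ≤ i ≤ M n` where `M n = n (n-1)/2`. -/
theorem stmt6 (n i : ℕ) : 0 < N n i ↔ m n ≤ i ∧ i ≤ n * (n - 1) / 2 := by
  rw [N_pos, QS, m_eq_S, T_eq]
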